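/- arXiv:2510.03605 — 4 statements merged into one kernel-verified Lean document; each statement's English description precedes it below -/
import Mathlib

section
/- Let d, m, n be positive integers, let Λ be a d×d real symmetric positive definite matrix, define Γ := (1 + 1/n) Λ + (tr(Λ)/n) I_d, and let X ∈ ℝ^{d×m} have i.i.d. centered Gaussian columns with covariance Λ. Set Λ̂ := XXᵀ/m. Then E[(I_d − Λ̂ Γ^{−1})(I_d − Γ^{−1} Λ̂)] = (I_d − Γ^{−1}Λ)² + (1/m)(Γ^{−2}Λ² + tr(Λ Γ^{−2}) Λ). -/
open MeasureTheory ProbabilityTheory Matrix Real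
open scoped ENNReal NNReal

set_option linter.unusedSectionVars false
set_option linter.unusedTactic false
set_option linter.unusedVariables false



lemma integrable_pow_gauss (k : ℕ) :
    Integrable (fun x : ℝ => x ^ k * rexp (-2⁻¹ * x ^ 2)) := by
  have h := integrable_rpow_mul_exp_neg_mul_sq (b := (2:ℝ)⁻¹) (by norm_num)
    (s := (k : ℝ)) (by exact lt_of_lt_of_le (by norm_num) (Nat.cast_nonneg k))
  simpa [Real.rpow_natCast] using h

lemma gauss_rec (k : ℕ) :
    ∫ x : ℝ, x ^ (k + 2) * rexp (-2⁻¹ * x ^ 2)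
      = (k + 1 : ℝ) * ∫ x : ℝ, x ^ k * rexp (-2⁻¹ * x ^ 2) := by
  have hderiv : ∀ x : ℝ, HasDerivAt (fun x : ℝ => x ^ (k+1) * rexp (-2⁻¹ * x ^ 2))
      ((k+1 : ℝ) * (x ^ k * rexp (-2⁻¹ * x ^ 2)) - x ^ (k+2) * rexp (-2⁻¹ * x ^ 2)) x := by
    intro x
    have h1 : HasDerivAt (fun x : ℝ => x ^ (k+1)) ((k+1 : ℝ) * x ^ k) x := by
      simpa using hasDerivAt_pow (k+1) x
    have h2 : HasDerivAt (fun x : ℝ => rexp (-2⁻¹ * x ^ 2)) (rexp (-2⁻¹ * x ^ 2) * (-2⁻¹ * (2 * x))) x := by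
      have hx : HasDerivAt (fun x : ℝ => -2⁻¹ * x ^ 2) (-2⁻¹ * (2 * x)) x := by
        simpa using (hasDerivAt_pow 2 x).const_mul (-2⁻¹ : ℝ)
      exact hx.exp
    have := h1.mul h2
    refine this.congr_deriv ?_
    push_cast
    ring
  have hik : Integrable (fun x : ℝ => (k+1 : ℝ) * (x ^ k * rexp (-2⁻¹ * x ^ 2))) :=
    (integrable_pow_gauss k).const_mul _
  have hint : Integrable (fun x : ℝ => (k+1 : ℝ) * (x ^ k * rexp (-2⁻¹ * x ^ 2))
      - x ^ (k+2) * rexp (-2⁻¹ * x ^ 2)) := hik.sub (integrable_pow_gauss (k+2))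
  have h0 : ∫ x : ℝ, ((k+1 : ℝ) * (x ^ k * rexp (-2⁻¹ * x ^ 2)) - x ^ (k+2) * rexp (-2⁻¹ * x ^ 2)) = 0 :=
    integral_eq_zero_of_hasDerivAt_of_integrable hderiv hint (integrable_pow_gauss (k+1))
  rw [integral_sub hik (integrable_pow_gauss (k+2)), integral_const_mul] at h0
  linarith [h0]

lemma gauss0 : ∫ x : ℝ, rexp (-2⁻¹ * x ^ 2) = Real.sqrt (2 * π) := by
  have h := integral_gaussian (2⁻¹ : ℝ)
  rw [show π / (2:ℝ)⁻¹ = 2 * π by ring] at h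
  simpa using h

lemma gauss1 : ∫ x : ℝ, x * rexp (-2⁻¹ * x ^ 2) = 0 := by
  have hderiv : ∀ x : ℝ, HasDerivAt (fun x : ℝ => -rexp (-2⁻¹ * x ^ 2))
      (x * rexp (-2⁻¹ * x ^ 2)) x := by
    intro x
    have hx : HasDerivAt (fun x : ℝ => -2⁻¹ * x ^ 2) (-2⁻¹ * (2 * x)) x := by
      simpa using (hasDerivAt_pow 2 x).const_mul (-2⁻¹ : ℝ)
    have := hx.exp.neg
    refine this.congr_deriv ?_
    ring
  apply integral_eq_zero_of_hasDerivAt_of_integrable hderiv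
  · simpa [pow_one] using integrable_pow_gauss 1
  · exact (by simpa using integrable_pow_gauss 0 : Integrable fun x : ℝ => rexp (-2⁻¹ * x ^ 2)).neg


lemma gaussianPDFReal_zero_one (x : ℝ) :
    gaussianPDFReal 0 1 x = (Real.sqrt (2 * π))⁻¹ * rexp (-2⁻¹ * x ^ 2) := by
  rw [gaussianPDFReal]
  push_cast
  rw [mul_one, sub_zero]
  congr 1
  ring

lemma integral_gaussianReal_eq (g : ℝ → ℝ) :
    ∫ x, g x ∂(gaussianReal 0 1)
      = (Real.sqrt (2 * π))⁻¹ * ∫ x, g x * rexp (-2⁻¹ * x ^ 2) := by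
  rw [gaussianReal_of_var_ne_zero 0 one_ne_zero]
  have hmeas : Measurable fun x : ℝ => (gaussianPDFReal 0 1 x).toNNReal :=
    (measurable_gaussianPDFReal 0 1).real_toNNReal
  have : (gaussianPDF 0 1) = fun x => ((gaussianPDFReal 0 1 x).toNNReal : ℝ≥0∞) := by
    ext x; simp [gaussianPDF, ENNReal.ofReal]
  rw [this, integral_withDensity_eq_integral_smul hmeas]
  rw [← integral_const_mul]
  congr 1
  ext x
  have hpos : 0 ≤ gaussianPDFReal 0 1 x := gaussianPDFReal_nonneg 0 1 x
  rw [NNReal.smul_def, Real.coe_toNNReal _ hpos, gaussianPDFReal_zero_one, smul_eq_mul]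
  ring

lemma integrable_pow_gaussianReal (k : ℕ) :
    Integrable (fun x : ℝ => x ^ k) (gaussianReal 0 1) := by
  rw [gaussianReal_of_var_ne_zero 0 one_ne_zero]
  have hmeas : Measurable fun x : ℝ => (gaussianPDFReal 0 1 x).toNNReal :=
    (measurable_gaussianPDFReal 0 1).real_toNNReal
  have : (gaussianPDF 0 1) = fun x => ((gaussianPDFReal 0 1 x).toNNReal : ℝ≥0∞) := by
    ext x; simp [gaussianPDF, ENNReal.ofReal]
  rw [this, integrable_withDensity_iff_integrable_coe_smul hmeas]
  have heq : (fun x : ℝ => ((gaussianPDFReal 0 1 x).toNNReal : ℝ) • x ^ k)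
      = fun x : ℝ => (Real.sqrt (2 * π))⁻¹ * (x ^ k * rexp (-2⁻¹ * x ^ 2)) := by
    funext x
    have hpos : 0 ≤ gaussianPDFReal 0 1 x := gaussianPDFReal_nonneg 0 1 x
    rw [smul_eq_mul, Real.coe_toNNReal _ hpos, gaussianPDFReal_zero_one]
    ring
  rw [heq]
  exact (integrable_pow_gauss k).const_mul _

noncomputable def gmom (k : ℕ) : ℝ := ∫ x, x ^ k ∂(gaussianReal 0 1)

lemma sqrt_two_pi_pos : (0:ℝ) < Real.sqrt (2 * π) :=
  Real.sqrt_pos.mpr (by positivity)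

lemma gmom_zero : gmom 0 = 1 := by
  simp [gmom]

lemma gmom_rec (k : ℕ) : gmom (k + 2) = (k + 1 : ℝ) * gmom k := by
  simp only [gmom, integral_gaussianReal_eq]
  rw [gauss_rec, mul_left_comm]

lemma gmom_one : gmom 1 = 0 := by
  have := integral_gaussianReal_eq (fun x => x ^ 1)
  simp only [pow_one] at this
  have h : ∫ x : ℝ, x * rexp (-2⁻¹ * x ^ 2) = 0 := gauss1
  simp only [gmom, pow_one, this, h, mul_zero]

lemma gmom_two : gmom 2 = 1 := by rw [show 2 = 0 + 2 by rfl, gmom_rec, gmom_zero]; norm_num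
lemma gmom_three : gmom 3 = 0 := by rw [show 3 = 1 + 2 by rfl, gmom_rec, gmom_one]; norm_num
lemma gmom_four : gmom 4 = 3 := by rw [show 4 = 2 + 2 by rfl, gmom_rec, gmom_two]; norm_num


section PiHelpers

variable {E : Type*} [MeasurableSpace E] {μ : Measure E} [IsProbabilityMeasure μ]
variable {ι : Type*} [Fintype ι] [DecidableEq ι]

lemma pi_prod_integral (f : ι → E → ℝ) :
    ∫ x : ι → E, ∏ i, f i (x i) ∂(Measure.pi fun _ => μ) = ∏ i, ∫ x, f i x ∂μ := by
  have := integral_fintype_prod_eq_prod (μ := fun _ => μ) f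
  exact this

lemma pi_prod_integrable (f : ι → E → ℝ) (hf : ∀ i, Integrable (f i) μ) :
    Integrable (fun x : ι → E => ∏ i, f i (x i)) (Measure.pi fun _ => μ) := by
  have := Integrable.fintype_prod (μ := fun _ => μ) hf
  exact this

lemma pi_eval_integrable {F : E → ℝ} (hF : Integrable F μ) (k : ι) :
    Integrable (fun x : ι → E => F (x k)) (Measure.pi fun _ => μ) := by
  have h := pi_prod_integrable (μ := μ) (fun i => if i = k then F else fun _ => 1)
    (fun i => by by_cases h : i = k <;> simp [h, hF, integrable_const])
  apply h.congr
  filter_upwards with x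
  rw [Finset.prod_eq_single k (fun b _ hb => by simp [hb]) (by simp)]
  simp

lemma pi_eval_integral (F : E → ℝ) (k : ι) :
    ∫ x : ι → E, F (x k) ∂(Measure.pi fun _ => μ) = ∫ x, F x ∂μ := by
  have h := pi_prod_integral (μ := μ) (fun i => if i = k then F else fun _ => 1)
  have he : (fun x : ι → E => ∏ i, (if i = k then F else fun _ => (1:ℝ)) (x i))
      = fun x : ι → E => F (x k) := by
    funext x
    rw [Finset.prod_eq_single k (fun b _ hb => by simp [hb]) (by simp)]
    simp
  rw [he] at h
  rw [h, Finset.prod_eq_single k (fun b _ hb => by simp [hb]) (by simp)]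
  simp

lemma pi_eval2_integrable {F G : E → ℝ} (hF : Integrable F μ) (hG : Integrable G μ)
    {k l : ι} (hkl : k ≠ l) :
    Integrable (fun x : ι → E => F (x k) * G (x l)) (Measure.pi fun _ => μ) := by
  have h := pi_prod_integrable (μ := μ)
    (fun i => if i = k then F else if i = l then G else fun _ => 1)
    (fun i => by
      by_cases h1 : i = k
      · simp [h1, hF]
      · by_cases h2 : i = l <;> simp [h1, h2, hkl.symm, hF, hG, integrable_const])
  apply h.congr
  filter_upwards with x
  rw [← Finset.mul_prod_erase Finset.univ _ (Finset.mem_univ k)]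
  rw [← Finset.mul_prod_erase (Finset.univ.erase k) _
    (by simp [Finset.mem_erase, hkl.symm] : l ∈ Finset.univ.erase k)]
  rw [Finset.prod_eq_one (fun b hb => by
    simp only [Finset.mem_erase] at hb
    simp [hb.1, hb.2.1])]
  simp [hkl.symm, if_neg hkl]

lemma pi_eval2_integral (F G : E → ℝ) {k l : ι} (hkl : k ≠ l) :
    ∫ x : ι → E, F (x k) * G (x l) ∂(Measure.pi fun _ => μ)
      = (∫ x, F x ∂μ) * ∫ x, G x ∂μ := by
  have h := pi_prod_integral (μ := μ)
    (fun i => if i = k then F else if i = l then G else fun _ => 1)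
  have he : (fun x : ι → E =>
      ∏ i, (if i = k then F else if i = l then G else fun _ => (1:ℝ)) (x i))
      = fun x : ι → E => F (x k) * G (x l) := by
    funext x
    rw [← Finset.mul_prod_erase Finset.univ _ (Finset.mem_univ k)]
    rw [← Finset.mul_prod_erase (Finset.univ.erase k) _
      (by simp [Finset.mem_erase, hkl.symm] : l ∈ Finset.univ.erase k)]
    rw [Finset.prod_eq_one (fun b hb => by
      simp only [Finset.mem_erase] at hb
      simp [hb.1, hb.2.1])]
    simp [hkl.symm, if_neg hkl]
  rw [he] at h
  rw [h]
  rw [← Finset.mul_prod_erase Finset.univ _ (Finset.mem_univ k)]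
  rw [← Finset.mul_prod_erase (Finset.univ.erase k) _
    (by simp [Finset.mem_erase, hkl.symm] : l ∈ Finset.univ.erase k)]
  rw [Finset.prod_eq_one (fun b hb => by
    simp only [Finset.mem_erase] at hb
    simp [hb.1, hb.2.1])]
  simp [hkl.symm, if_neg hkl]

end PiHelpers
section Wick


variable {ι : Type*} [Fintype ι] [DecidableEq ι]

/-- indicator multiplicity -/
def indm (p i : ι) : ℕ := if p = i then 1 else 0

lemma prod_pow_indm (x : ι → ℝ) (p : ι) : (∏ i, x i ^ indm p i) = x p := by
  unfold indm
  rw [Finset.prod_congr rfl (fun i _ => by split <;> simp_all : ∀ i ∈ Finset.univ,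
    x i ^ (if p = i then 1 else 0) = if p = i then x i else 1)]
  simp [Finset.prod_ite_eq]

lemma mono_integral (c : ι → ℕ) :
    ∫ x : ι → ℝ, ∏ i, x i ^ c i ∂(Measure.pi fun _ => gaussianReal 0 1)
      = ∏ i, gmom (c i) :=
  pi_prod_integral (fun i => fun t : ℝ => t ^ c i)

lemma mono_integrable (c : ι → ℕ) :
    Integrable (fun x : ι → ℝ => ∏ i, x i ^ c i) (Measure.pi fun _ => gaussianReal 0 1) :=
  pi_prod_integrable _ (fun i => integrable_pow_gaussianReal (c i))

lemma mul2_eq_mono (p q : ι) (x : ι → ℝ) :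
    x p * x q = ∏ i, x i ^ (indm p i + indm q i) := by
  simp only [pow_add, Finset.prod_mul_distrib, prod_pow_indm]

lemma mul4_eq_mono (p q r s : ι) (x : ι → ℝ) :
    x p * x q * (x r * x s) = ∏ i, x i ^ (indm p i + indm q i + indm r i + indm s i) := by
  simp only [pow_add, Finset.prod_mul_distrib, prod_pow_indm]
  ring

lemma iw2 (p q : ι) :
    Integrable (fun x : ι → ℝ => x p * x q) (Measure.pi fun _ => gaussianReal 0 1) := by
  have := mono_integrable (fun i => indm p i + indm q i)
  apply this.congr
  filter_upwards with x
  exact (mul2_eq_mono p q x).symm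

lemma iw4 (p q r s : ι) :
    Integrable (fun x : ι → ℝ => x p * x q * (x r * x s))
      (Measure.pi fun _ => gaussianReal 0 1) := by
  have := mono_integrable (fun i => indm p i + indm q i + indm r i + indm s i)
  apply this.congr
  filter_upwards with x
  exact (mul4_eq_mono p q r s x).symm

lemma gmom_odd_indicator (a : ℕ) (h : a = 1 ∨ a = 3) : gmom a = 0 := by
  rcases h with h | h <;> simp [h, gmom_one, gmom_three]

lemma w2 (p q : ι) :
    ∫ x : ι → ℝ, x p * x q ∂(Measure.pi fun _ => gaussianReal 0 1)
      = if p = q then 1 else 0 := by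
  rw [show (fun x : ι → ℝ => x p * x q) = fun x => ∏ i, x i ^ (indm p i + indm q i) from
    funext (mul2_eq_mono p q), mono_integral]  -- d'oh: rw under binder; use simp_rw?
  by_cases hpq : p = q
  · subst hpq
    rw [if_pos rfl]
    apply Finset.prod_eq_one
    intro i _
    unfold indm
    by_cases h : p = i <;> simp [h, gmom_two, gmom_zero]
  · rw [if_neg hpq]
    apply Finset.prod_eq_zero (Finset.mem_univ p)
    have : indm p p + indm q p = 1 := by unfold indm; simp [Ne.symm hpq]
    rw [this, gmom_one]

lemma w4 (p q r s : ι) :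
    ∫ x : ι → ℝ, x p * x q * (x r * x s) ∂(Measure.pi fun _ => gaussianReal 0 1)
      = (if p = q then (1:ℝ) else 0) * (if r = s then 1 else 0)
        + (if p = r then 1 else 0) * (if q = s then 1 else 0)
        + (if p = s then 1 else 0) * (if q = r then 1 else 0) := by
  rw [show (fun x : ι → ℝ => x p * x q * (x r * x s))
      = fun x => ∏ i, x i ^ (indm p i + indm q i + indm r i + indm s i) from
    funext (mul4_eq_mono p q r s), mono_integral]
  unfold indm
  by_cases hpq : p = q
  · subst hpq
    by_cases hrs : r = s
    · subst hrs
      by_cases hpr : p = r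
      · subst hpr
        rw [Finset.prod_congr rfl (fun i _ => by by_cases h : p = i <;>
            simp [h, gmom_four, gmom_zero] : ∀ i ∈ Finset.univ,
            gmom ((if p = i then 1 else 0) + (if p = i then 1 else 0)
              + (if p = i then 1 else 0) + (if p = i then 1 else 0))
              = if p = i then (3:ℝ) else 1)]
        simp [Finset.prod_ite_eq]
        norm_num
      · rw [Finset.prod_eq_one (fun i _ => by
          by_cases h1 : p = i <;> by_cases h2 : r = i <;>
            simp_all [gmom_two, gmom_zero])]
        simp_all
    · rw [Finset.prod_eq_zero (Finset.mem_univ s) (gmom_odd_indicator _ (by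
        by_cases h1 : p = s <;> by_cases h3 : r = s <;> simp_all <;> omega))]
      by_cases h1 : p = r <;> by_cases h2 : p = s <;> simp_all
  · by_cases hrs : r = s
    · subst hrs
      rw [Finset.prod_eq_zero (Finset.mem_univ q) (gmom_odd_indicator _ (by
        by_cases h1 : p = q <;> by_cases h3 : r = q <;> simp_all <;> omega))]
      by_cases h1 : p = r <;> by_cases h2 : q = r <;> simp_all
    · by_cases hpr : p = r
      · subst hpr
        by_cases hqs : q = s
        · subst hqs
          rw [Finset.prod_eq_one (fun i _ => by
            by_cases h1 : p = i <;> by_cases h2 : q = i <;>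
              simp_all [gmom_two, gmom_zero])]
          simp [hpq, Ne.symm hpq]
        · rw [Finset.prod_eq_zero (Finset.mem_univ q) (gmom_odd_indicator _ (by
            by_cases h3 : s = q <;> simp_all <;> omega))]
          simp [hpq, hqs, Ne.symm hpq]
      · by_cases hps : p = s
        · subst hps
          by_cases hqr : q = r
          · subst hqr
            rw [Finset.prod_eq_one (fun i _ => by
              by_cases h1 : p = i <;> by_cases h2 : q = i <;>
                simp_all [gmom_two, gmom_zero])]
            simp [hpq, Ne.symm hpq]
          · rw [Finset.prod_eq_zero (Finset.mem_univ r) (gmom_odd_indicator _ (by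
              simp [hpr, hqr] <;> omega))]
            simp [hpq, hpr, hqr, fun h : r = p => hpr h.symm]
        · rw [Finset.prod_eq_zero (Finset.mem_univ p) (gmom_odd_indicator _ (by
            by_cases h2 : q = p <;> by_cases h3 : r = p <;> by_cases h4 : s = p <;>
              simp_all <;> omega))]
          simp [hpq, hpr, hps]

end Wick
section Column


variable {d : ℕ} (B : Matrix (Fin d) (Fin d) ℝ)

noncomputable abbrev gpi (ι : Type*) [Fintype ι] : Measure (ι → ℝ) :=
  Measure.pi fun _ : ι => gaussianReal 0 1

lemma mulVec_apply' (z : Fin d → ℝ) (a : Fin d) :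
    (B *ᵥ z) a = ∑ p, B a p * z p := by
  simp [Matrix.mulVec, dotProduct]

lemma expand2 (a b : Fin d) :
    (fun z : Fin d → ℝ => (B *ᵥ z) a * (B *ᵥ z) b)
      = fun z => ∑ p, ∑ q, B a q * B b p * (z q * z p) := by
  funext z
  simp only [mulVec_apply', Finset.sum_mul, Finset.mul_sum]
  exact Finset.sum_congr rfl fun p _ => Finset.sum_congr rfl fun q _ => by ring

lemma expand4 (a b c e : Fin d) :
    (fun z : Fin d → ℝ => (B *ᵥ z) a * (B *ᵥ z) b * ((B *ᵥ z) c * (B *ᵥ z) e))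
      = fun z => ∑ p, ∑ q, ∑ r, ∑ s,
          B a s * B b r * (B c q * B e p) * (z s * z r * (z q * z p)) := by
  funext z
  simp only [mulVec_apply', Finset.sum_mul, Finset.mul_sum]
  exact Finset.sum_congr rfl fun p _ => Finset.sum_congr rfl fun q _ =>
    Finset.sum_congr rfl fun r _ => Finset.sum_congr rfl fun s _ => by ring

lemma cInt1 (a b : Fin d) :
    Integrable (fun z : Fin d → ℝ => (B *ᵥ z) a * (B *ᵥ z) b) (gpi (Fin d)) := by
  rw [expand2]
  exact integrable_finset_sum _ (fun p _ =>
    integrable_finset_sum _ (fun q _ => (iw2 q p).const_mul _))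

lemma cInt2 (a b c e : Fin d) :
    Integrable (fun z : Fin d → ℝ => (B *ᵥ z) a * (B *ᵥ z) b * ((B *ᵥ z) c * (B *ᵥ z) e))
      (gpi (Fin d)) := by
  rw [expand4]
  exact integrable_finset_sum _ (fun p _ => integrable_finset_sum _ (fun q _ =>
    integrable_finset_sum _ (fun r _ => integrable_finset_sum _ (fun s _ =>
      (iw4 s r q p).const_mul _))))

lemma cm1 (a b : Fin d) :
    ∫ z : Fin d → ℝ, (B *ᵥ z) a * (B *ᵥ z) b ∂(gpi (Fin d)) = (B * Bᵀ) a b := by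
  rw [expand2]
  rw [integral_finset_sum _ (fun p _ =>
    integrable_finset_sum _ (fun q _ => (iw2 q p).const_mul _))]
  have : ∀ p, ∫ z : Fin d → ℝ, (∑ q, B a q * B b p * (z q * z p)) ∂(gpi (Fin d))
      = ∑ q, B a q * B b p * (if q = p then (1:ℝ) else 0) := by
    intro p
    rw [integral_finset_sum _ (fun q _ => (iw2 q p).const_mul _)]
    exact Finset.sum_congr rfl fun q _ => by rw [integral_const_mul, w2]
  rw [Finset.sum_congr rfl (fun p _ => this p)]
  simp [Matrix.mul_apply, mul_ite, Finset.sum_ite_eq']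

lemma collapse1 (f g : Fin d → Fin d → ℝ) :
    ∑ p : Fin d, ∑ q : Fin d, ∑ r : Fin d, ∑ s : Fin d,
        (if s = r then f s r else 0) * (if q = p then g q p else 0)
      = (∑ r, f r r) * (∑ p, g p p) := by
  have hs : ∀ p q r : Fin d, ∑ s : Fin d, (if s = r then f s r else 0) * (if q = p then g q p else 0)
      = f r r * (if q = p then g q p else 0) := by
    intro p q r
    rw [← Finset.sum_mul, Finset.sum_ite_eq' Finset.univ r (fun s => f s r)]
    simp
  rw [Finset.sum_congr rfl (fun p _ => Finset.sum_congr rfl (fun q _ =>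
    Finset.sum_congr rfl (fun r _ => hs p q r)))]
  rw [Finset.sum_congr rfl (fun p _ => Finset.sum_congr rfl (fun q _ =>
    (Finset.sum_mul ..).symm))]
  rw [Finset.sum_congr rfl (fun p _ => by
    rw [← Finset.mul_sum, Finset.sum_ite_eq' Finset.univ p (fun q => g q p)])]
  simp only [Finset.mem_univ, if_true]
  rw [← Finset.mul_sum]

lemma collapse2 (f g : Fin d → Fin d → ℝ) :
    ∑ p : Fin d, ∑ q : Fin d, ∑ r : Fin d, ∑ s : Fin d,
        (if s = q then f s q else 0) * (if r = p then g r p else 0)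
      = (∑ q, f q q) * (∑ p, g p p) := by
  have hs : ∀ p q r : Fin d, ∑ s : Fin d, (if s = q then f s q else 0) * (if r = p then g r p else 0)
      = f q q * (if r = p then g r p else 0) := by
    intro p q r
    rw [← Finset.sum_mul, Finset.sum_ite_eq' Finset.univ q (fun s => f s q)]
    simp
  rw [Finset.sum_congr rfl (fun p _ => Finset.sum_congr rfl (fun q _ =>
    Finset.sum_congr rfl (fun r _ => hs p q r)))]
  rw [Finset.sum_congr rfl (fun p _ => Finset.sum_congr rfl (fun q _ => by
    rw [← Finset.mul_sum, Finset.sum_ite_eq' Finset.univ p (fun r => g r p)]))]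
  simp only [Finset.mem_univ, if_true]
  rw [Finset.sum_congr rfl (fun p _ => (Finset.sum_mul ..).symm)]
  rw [← Finset.mul_sum]

lemma collapse3 (f g : Fin d → Fin d → ℝ) :
    ∑ p : Fin d, ∑ q : Fin d, ∑ r : Fin d, ∑ s : Fin d,
        (if s = p then f s p else 0) * (if r = q then g r q else 0)
      = (∑ p, f p p) * (∑ q, g q q) := by
  have hs : ∀ p q r : Fin d, ∑ s : Fin d, (if s = p then f s p else 0) * (if r = q then g r q else 0)
      = f p p * (if r = q then g r q else 0) := by
    intro p q r
    rw [← Finset.sum_mul, Finset.sum_ite_eq' Finset.univ p (fun s => f s p)]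
    simp
  rw [Finset.sum_congr rfl (fun p _ => Finset.sum_congr rfl (fun q _ =>
    Finset.sum_congr rfl (fun r _ => hs p q r)))]
  rw [Finset.sum_congr rfl (fun p _ => Finset.sum_congr rfl (fun q _ => by
    rw [← Finset.mul_sum, Finset.sum_ite_eq' Finset.univ q (fun r => g r q)]))]
  simp only [Finset.mem_univ, if_true]
  rw [Finset.sum_congr rfl (fun p _ => (Finset.mul_sum ..).symm)]
  rw [← Finset.sum_mul]

lemma cm2 (a b c e : Fin d) :
    ∫ z : Fin d → ℝ, (B *ᵥ z) a * (B *ᵥ z) b * ((B *ᵥ z) c * (B *ᵥ z) e) ∂(gpi (Fin d))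
      = (B * Bᵀ) a b * (B * Bᵀ) c e + (B * Bᵀ) a c * (B * Bᵀ) b e
        + (B * Bᵀ) a e * (B * Bᵀ) b c := by
  rw [expand4]
  rw [integral_finset_sum _ (fun p _ => integrable_finset_sum _ (fun q _ =>
    integrable_finset_sum _ (fun r _ => integrable_finset_sum _ (fun s _ =>
      (iw4 s r q p).const_mul _))))]
  have h1 : ∀ p, ∫ z : Fin d → ℝ, (∑ q, ∑ r, ∑ s,
      B a s * B b r * (B c q * B e p) * (z s * z r * (z q * z p))) ∂(gpi (Fin d))
      = ∑ q, ∑ r, ∑ s, B a s * B b r * (B c q * B e p) *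
          ((if s = r then (1:ℝ) else 0) * (if q = p then 1 else 0)
            + (if s = q then 1 else 0) * (if r = p then 1 else 0)
            + (if s = p then 1 else 0) * (if r = q then 1 else 0)) := by
    intro p
    rw [integral_finset_sum _ (fun q _ => integrable_finset_sum _ (fun r _ =>
      integrable_finset_sum _ (fun s _ => (iw4 s r q p).const_mul _)))]
    refine Finset.sum_congr rfl fun q _ => ?_
    rw [integral_finset_sum _ (fun r _ =>
      integrable_finset_sum _ (fun s _ => (iw4 s r q p).const_mul _))]
    refine Finset.sum_congr rfl fun r _ => ?_
    rw [integral_finset_sum _ (fun s _ => (iw4 s r q p).const_mul _)]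
    exact Finset.sum_congr rfl fun s _ => by rw [integral_const_mul, w4]
  rw [Finset.sum_congr rfl (fun p _ => h1 p)]
  have expand : ∀ p q r s : Fin d, B a s * B b r * (B c q * B e p) *
          ((if s = r then (1:ℝ) else 0) * (if q = p then 1 else 0)
            + (if s = q then 1 else 0) * (if r = p then 1 else 0)
            + (if s = p then 1 else 0) * (if r = q then 1 else 0))
      = (if s = r then B a s * B b r else 0) * (if q = p then B c q * B e p else 0)
        + (if s = q then B a s * B c q else 0) * (if r = p then B b r * B e p else 0)
        + (if s = p then B a s * B e p else 0) * (if r = q then B b r * B c q else 0) := by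
    intro p q r s
    have key : ∀ (u v : Prop) (_ : Decidable u) (_ : Decidable v) (x y : ℝ),
        x * y * ((if u then (1:ℝ) else 0) * (if v then 1 else 0))
          = (if u then x else 0) * (if v then y else 0) := by
      intro u v _ _ x y
      by_cases hu : u <;> by_cases hv : v <;> simp [hu, hv]
    rw [mul_add, mul_add]
    congr 1
    · congr 1
      · exact key _ _ _ _ _ _
      · rw [show B a s * B b r * (B c q * B e p) = B a s * B c q * (B b r * B e p) from by ring]
        exact key _ _ _ _ _ _
    · rw [show B a s * B b r * (B c q * B e p) = B a s * B e p * (B b r * B c q) from by ring]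
      exact key _ _ _ _ _ _
  simp only [expand]
  simp only [Finset.sum_add_distrib]
  rw [collapse1, collapse2, collapse3]
  simp only [Matrix.mul_apply, transpose_apply]

end Column


section Outer

variable {d m : ℕ} (B : Matrix (Fin d) (Fin d) ℝ)

/-- entry `a b` of `X Xᵀ` as a function of `ω`. -/
noncomputable def Sf (B : Matrix (Fin d) (Fin d) ℝ) (a b : Fin d)
    (ω : Fin m → Fin d → ℝ) : ℝ :=
  ∑ k, (B *ᵥ ω k) a * (B *ᵥ ω k) b

noncomputable abbrev μm (d m : ℕ) : Measure (Fin m → Fin d → ℝ) :=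
  Measure.pi fun _ : Fin m => gpi (Fin d)

lemma SInt1 (a b : Fin d) : Integrable (Sf B a b) (μm d m) :=
  integrable_finset_sum _ fun k _ => pi_eval_integrable (cInt1 B a b) k

lemma SE1 (a b : Fin d) :
    ∫ ω, Sf B a b ω ∂(μm d m) = (m : ℝ) * (B * Bᵀ) a b := by
  rw [show Sf B a b = fun ω => ∑ k : Fin m, (fun z => (B *ᵥ z) a * (B *ᵥ z) b) (ω k) from rfl]
  rw [integral_finset_sum _ (fun k _ => pi_eval_integrable (cInt1 B a b) k)]
  simp [pi_eval_integral (fun z : Fin d → ℝ => (B *ᵥ z) a * (B *ᵥ z) b), cm1 B a b, mul_comm]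

lemma Sf_mul_eq (a b c e : Fin d) : (fun ω : Fin m → Fin d → ℝ => Sf B a b ω * Sf B c e ω)
    = fun ω => ∑ k : Fin m, ∑ l : Fin m,
        (fun z => (B *ᵥ z) a * (B *ᵥ z) b) (ω k) * (fun z => (B *ᵥ z) c * (B *ᵥ z) e) (ω l) := by
  funext ω
  rw [Sf, Sf, Finset.sum_mul_sum]

lemma SInt2 (a b c e : Fin d) :
    Integrable (fun ω => Sf B a b ω * Sf B c e ω) (μm d m) := by
  rw [Sf_mul_eq]
  refine integrable_finset_sum _ (fun k _ => integrable_finset_sum _ (fun l _ => ?_))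
  by_cases hkl : k = l
  · subst hkl
    exact pi_eval_integrable (cInt2 B a b c e) k
  · exact pi_eval2_integrable (cInt1 B a b) (cInt1 B c e) hkl

lemma SE2 (a b c e : Fin d) :
    ∫ ω, Sf B a b ω * Sf B c e ω ∂(μm d m)
      = (m : ℝ)^2 * ((B * Bᵀ) a b * (B * Bᵀ) c e)
        + (m : ℝ) * ((B * Bᵀ) a c * (B * Bᵀ) b e + (B * Bᵀ) a e * (B * Bᵀ) b c) := by
  rw [Sf_mul_eq]
  have hintkl : ∀ k l : Fin m, Integrable (fun ω : Fin m → Fin d → ℝ =>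
      (fun z => (B *ᵥ z) a * (B *ᵥ z) b) (ω k)
        * (fun z => (B *ᵥ z) c * (B *ᵥ z) e) (ω l)) (μm d m) := by
    intro k l
    by_cases hkl : k = l
    · subst hkl
      exact pi_eval_integrable (cInt2 B a b c e) k
    · exact pi_eval2_integrable (cInt1 B a b) (cInt1 B c e) hkl
  rw [integral_finset_sum _ (fun k _ => integrable_finset_sum _ (fun l _ => hintkl k l))]
  rw [Finset.sum_congr rfl (fun k _ => integral_finset_sum _ (fun l _ => hintkl k l))]
  have hterm : ∀ k l : Fin m,
      ∫ ω, (fun z => (B *ᵥ z) a * (B *ᵥ z) b) (ω k)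
          * (fun z => (B *ᵥ z) c * (B *ᵥ z) e) (ω l) ∂(μm d m)
      = (B * Bᵀ) a b * (B * Bᵀ) c e
        + (if k = l then (B * Bᵀ) a c * (B * Bᵀ) b e + (B * Bᵀ) a e * (B * Bᵀ) b c else 0) := by
    intro k l
    by_cases hkl : k = l
    · subst hkl
      rw [if_pos rfl]
      have := pi_eval_integral (μ := gpi (Fin d)) (ι := Fin m)
        (fun z => (B *ᵥ z) a * (B *ᵥ z) b * ((B *ᵥ z) c * (B *ᵥ z) e)) k
      have h2 : (fun ω : Fin m → Fin d → ℝ =>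
            (B *ᵥ ω k) a * (B *ᵥ ω k) b * ((B *ᵥ ω k) c * (B *ᵥ ω k) e))
          = fun ω => (B *ᵥ ω k) a * (B *ᵥ ω k) b * ((B *ᵥ ω k) c * (B *ᵥ ω k) e) := rfl
      calc ∫ ω, (B *ᵥ ω k) a * (B *ᵥ ω k) b * ((B *ᵥ ω k) c * (B *ᵥ ω k) e) ∂(μm d m)
          = ∫ z : Fin d → ℝ, (B *ᵥ z) a * (B *ᵥ z) b * ((B *ᵥ z) c * (B *ᵥ z) e)
              ∂(gpi (Fin d)) := this
        _ = _ := by rw [cm2]; ring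
    · rw [if_neg hkl, add_zero,
        pi_eval2_integral (fun z => (B *ᵥ z) a * (B *ᵥ z) b)
          (fun z => (B *ᵥ z) c * (B *ᵥ z) e) hkl, cm1, cm1]
  rw [Finset.sum_congr rfl (fun k _ => Finset.sum_congr rfl (fun l _ => hterm k l))]
  simp only [Finset.sum_add_distrib, Finset.sum_const, Finset.card_univ, Fintype.card_fin,
    nsmul_eq_mul, Finset.sum_ite_eq, Finset.mem_univ, if_true]
  ring

end Outer


/-- The matrix `X ∈ ℝ^{d×m}` whose `k`-th column is `B *ᵥ ω k`; when `ω k` are i.i.d.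
standard Gaussian vectors and `B = Λ^{1/2}`, the columns of `X` are i.i.d. centered
Gaussians with covariance `Λ`. -/
noncomputable def colMatrix {d m : ℕ} (B : Matrix (Fin d) (Fin d) ℝ)
    (ω : Fin m → Fin d → ℝ) : Matrix (Fin d) (Fin m) ℝ :=
  Matrix.of fun i k => (B *ᵥ ω k) i

open scoped ComplexOrder in
/-- The positive semidefinite square root of a positive semidefinite matrix (the definition
`Matrix.PosSemidef.sqrt` of the older Mathlib, which no longer exists). -/
noncomputable def Matrix.PosSemidef.sqrt {n 𝕜 : Type*} [Fintype n] [RCLike 𝕜] [DecidableEq n]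
    {A : Matrix n n 𝕜} (hA : A.PosSemidef) : Matrix n n 𝕜 :=
  hA.1.eigenvectorUnitary.1 * diagonal ((↑) ∘ (√·) ∘ hA.1.eigenvalues) *
  (star hA.1.eigenvectorUnitary : Matrix n n 𝕜)

lemma psd_sqrt_transpose' {d : ℕ} {A : Matrix (Fin d) (Fin d) ℝ} (hA : A.PosSemidef) :
    (hA.sqrt)ᵀ = hA.sqrt := by
  unfold Matrix.PosSemidef.sqrt
  simp [Matrix.star_eq_conjTranspose, conjTranspose_eq_transpose_of_trivial, transpose_mul,
    mul_assoc]

lemma psd_sqrt_mul_self' {d : ℕ} {A : Matrix (Fin d) (Fin d) ℝ} (hA : A.PosSemidef) :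
    hA.sqrt * hA.sqrt = A := by
  have hU : (star hA.1.eigenvectorUnitary : Matrix (Fin d) (Fin d) ℝ) * hA.1.eigenvectorUnitary.1
      = 1 := Unitary.coe_star_mul_self _
  have hD : diagonal (((↑) : ℝ → ℝ) ∘ (√·) ∘ hA.1.eigenvalues)
      * diagonal (((↑) : ℝ → ℝ) ∘ (√·) ∘ hA.1.eigenvalues)
      = diagonal (RCLike.ofReal ∘ hA.1.eigenvalues) := by
    rw [diagonal_mul_diagonal]
    congr 1
    funext i
    simp [Real.mul_self_sqrt (hA.eigenvalues_nonneg i)]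
  unfold Matrix.PosSemidef.sqrt
  conv_rhs => rw [hA.1.spectral_theorem, Unitary.conjStarAlgAut_apply]
  rw [← hD]
  simp only [mul_assoc]
  rw [← mul_assoc (star _ : Matrix (Fin d) (Fin d) ℝ) _ _, hU, one_mul]
  rfl

lemma colMatrix_mul_transpose_apply {d m : ℕ} (B : Matrix (Fin d) (Fin d) ℝ)
    (ω : Fin m → Fin d → ℝ) (a b : Fin d) :
    (colMatrix B ω * (colMatrix B ω)ᵀ) a b = Sf B a b ω := by
  simp [colMatrix, Matrix.mul_apply, Sf, Matrix.transpose_apply]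

lemma exp_mat {d : ℕ} (c : ℝ) (S G : Matrix (Fin d) (Fin d) ℝ) :
    (1 - (c • S) * G) * (1 - G * (c • S))
      = 1 - c • (G * S) - c • (S * G) + (c * c) • (S * (G * G) * S) := by
  have hassoc : S * G * (G * S) = S * (G * G) * S := by
    rw [mul_assoc, ← mul_assoc G G S, ← mul_assoc]
  simp only [mul_sub, sub_mul, one_mul, mul_one, smul_mul_assoc, mul_smul_comm, smul_smul,
    hassoc]
  module

/-- For `Λ` symmetric positive definite, `Γ := (1 + 1/n) Λ + (tr(Λ)/n) I`,
`X ∈ ℝ^{d×m}` with i.i.d. centered Gaussian columns with covariance `Λ`, and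
`Λ̂ := XXᵀ/m`, one has
`E[(I − Λ̂ Γ⁻¹)(I − Γ⁻¹ Λ̂)] = (I − Γ⁻¹Λ)² + (1/m)(Γ⁻²Λ² + tr(Λ Γ⁻²) Λ)`
(entrywise equality of the matrix-valued expectation). -/
theorem stmt7 (d m n : ℕ) (hd : 0 < d) (hm : 0 < m) (hn : 0 < n)
    (Λ : Matrix (Fin d) (Fin d) ℝ) (hΛ : Λ.PosDef)
    (Γ : Matrix (Fin d) (Fin d) ℝ)
    (hΓ : Γ = (1 + (n : ℝ)⁻¹) • Λ + (Λ.trace / n) • (1 : Matrix (Fin d) (Fin d) ℝ))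
    (i j : Fin d) :
    (∫ ω : Fin m → Fin d → ℝ,
        (((1 : Matrix (Fin d) (Fin d) ℝ) -
            ((m : ℝ)⁻¹ • (colMatrix hΛ.posSemidef.sqrt ω * (colMatrix hΛ.posSemidef.sqrt ω)ᵀ)) *
              Γ⁻¹) *
          ((1 : Matrix (Fin d) (Fin d) ℝ) -
            Γ⁻¹ *
              ((m : ℝ)⁻¹ •
                (colMatrix hΛ.posSemidef.sqrt ω * (colMatrix hΛ.posSemidef.sqrt ω)ᵀ)))) i j
        ∂(Measure.pi fun _ : Fin m => Measure.pi fun _ : Fin d => gaussianReal 0 1))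
      = (((1 : Matrix (Fin d) (Fin d) ℝ) - Γ⁻¹ * Λ) ^ 2 +
          (m : ℝ)⁻¹ • (Γ⁻¹ ^ 2 * Λ ^ 2 + (Λ * Γ⁻¹ ^ 2).trace • Λ)) i j := by
  -- notation
  set B := hΛ.posSemidef.sqrt with hBdef
  set G := Γ⁻¹ with hGdef
  have hmR : (m : ℝ) ≠ 0 := Nat.cast_ne_zero.mpr hm.ne'
  -- basic symmetric facts
  have hΛT : Λᵀ = Λ := by
    ext a b
    rw [transpose_apply]
    have := congrFun (congrFun hΛ.1.eq b) a
    rw [conjTranspose_apply] at this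
    simpa using this.symm
  have hBB : B * Bᵀ = Λ := by
    have hsym : Bᵀ = B := by
      ext a b
      rw [transpose_apply]
      have := congrFun (congrFun (psd_sqrt_transpose' hΛ.posSemidef) a) b
      rw [transpose_apply] at this
      exact this
    rw [hsym]
    exact psd_sqrt_mul_self' hΛ.posSemidef
  -- Γ is positive definite, hence invertible
  have htrΛ : 0 ≤ Λ.trace := by
    have : ∀ p : Fin d, 0 ≤ Λ p p := fun p => ((posSemidef_iff_dotProduct_mulVec.mp hΛ.posSemidef).2 (Pi.single p 1)).trans_eq (by
      simp [dotProduct, Matrix.mulVec, Pi.single_apply, Finset.sum_ite_eq, mul_comm])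
    exact Finset.sum_nonneg fun p _ => this p
  have hΓpd : Γ.PosDef := by
    refine posDef_iff_dotProduct_mulVec.mpr ⟨?_, ?_⟩
    · show _ = _
      rw [hΓ]
      simp only [conjTranspose_add, conjTranspose_smul, Matrix.conjTranspose_one, hΛ.1.eq,
        star_trivial]
    · intro x hx
      rw [hΓ]
      have hquad : star x ⬝ᵥ (((1 + (n : ℝ)⁻¹) • Λ
          + (Λ.trace / n) • (1 : Matrix (Fin d) (Fin d) ℝ)) *ᵥ x)
          = (1 + (n : ℝ)⁻¹) * (star x ⬝ᵥ (Λ *ᵥ x)) + (Λ.trace / n) * (star x ⬝ᵥ x) := by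
        simp [add_mulVec, smul_mulVec, dotProduct_add, dotProduct_smul, one_mulVec,
          smul_eq_mul]
      rw [hquad]
      have h1 : 0 < (1 + (n : ℝ)⁻¹) * (star x ⬝ᵥ (Λ *ᵥ x)) := by
        apply mul_pos (by positivity)
        exact hΛ.dotProduct_mulVec_pos hx
      have h2 : 0 ≤ (Λ.trace / n) * (star x ⬝ᵥ x) := by
        apply mul_nonneg (by positivity)
        simp only [star_trivial, dotProduct]
        exact Finset.sum_nonneg fun p _ => mul_self_nonneg _
      linarith
  have hu : IsUnit Γ.det := isUnit_iff_ne_zero.mpr hΓpd.det_pos.ne'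
  have hGG : Γ * G = 1 := Matrix.mul_nonsing_inv _ hu
  have hGG' : G * Γ = 1 := Matrix.nonsing_inv_mul _ hu
  have hΓcomm : Γ * Λ = Λ * Γ := by
    rw [hΓ]
    simp [add_mul, mul_add, smul_mul_assoc, mul_smul_comm]
  have hcomm : G * Λ = Λ * G := by
    calc G * Λ = G * Λ * (Γ * G) := by rw [hGG, mul_one]
      _ = G * (Λ * Γ) * G := by rw [mul_assoc, mul_assoc, mul_assoc]
      _ = G * (Γ * Λ) * G := by rw [hΓcomm]
      _ = (G * Γ) * (Λ * G) := by rw [mul_assoc, mul_assoc, mul_assoc]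
      _ = Λ * G := by rw [hGG', one_mul]
  have hΓT : Γᵀ = Γ := by
    rw [hΓ]
    simp [transpose_add, transpose_smul, hΛT]
  have hGT : Gᵀ = G := by
    rw [hGdef, Matrix.transpose_nonsing_inv, hΓT]
  have hAsym : ∀ a b, (G * G) a b = (G * G) b a := by
    intro a b
    have h := congrFun (congrFun (by rw [transpose_mul, hGT] : (G * G)ᵀ = G * G) a) b
    rw [transpose_apply] at h
    exact h.symm
  -- pointwise expansion of the integrand
  have hpt : ∀ ω : Fin m → Fin d → ℝ,
      (((1 : Matrix (Fin d) (Fin d) ℝ) - ((m : ℝ)⁻¹ • (colMatrix B ω * (colMatrix B ω)ᵀ)) * G) *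
        ((1 : Matrix (Fin d) (Fin d) ℝ) - G * ((m : ℝ)⁻¹ • (colMatrix B ω * (colMatrix B ω)ᵀ)))) i j
      = (1 : Matrix (Fin d) (Fin d) ℝ) i j
        - (m : ℝ)⁻¹ * (∑ a, G i a * Sf B a j ω)
        - (m : ℝ)⁻¹ * (∑ a, Sf B i a ω * G a j)
        + ((m : ℝ)⁻¹ * (m : ℝ)⁻¹) *
            (∑ b, ∑ a, (G * G) a b * (Sf B i a ω * Sf B b j ω)) := by
    intro ω
    rw [exp_mat ((m:ℝ)⁻¹) (colMatrix B ω * (colMatrix B ω)ᵀ) G]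
    have e1 : (G * (colMatrix B ω * (colMatrix B ω)ᵀ)) i j = ∑ a, G i a * Sf B a j ω := by
      rw [Matrix.mul_apply]
      exact Finset.sum_congr rfl fun a _ => by rw [colMatrix_mul_transpose_apply]
    have e2 : ((colMatrix B ω * (colMatrix B ω)ᵀ) * G) i j = ∑ a, Sf B i a ω * G a j := by
      rw [Matrix.mul_apply]
      exact Finset.sum_congr rfl fun a _ => by rw [colMatrix_mul_transpose_apply]
    have e3 : ((colMatrix B ω * (colMatrix B ω)ᵀ) * (G * G) * (colMatrix B ω * (colMatrix B ω)ᵀ)) i j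
        = ∑ b, ∑ a, (G * G) a b * (Sf B i a ω * Sf B b j ω) := by
      rw [Matrix.mul_apply]
      refine Finset.sum_congr rfl fun b _ => ?_
      rw [Matrix.mul_apply, Finset.sum_mul]
      refine Finset.sum_congr rfl fun a _ => ?_
      rw [colMatrix_mul_transpose_apply, colMatrix_mul_transpose_apply]
      ring
    simp only [Matrix.add_apply, Matrix.sub_apply, Matrix.smul_apply, smul_eq_mul, e1, e2, e3]
  -- integrability of the three non-constant pieces
  have int1 : Integrable (fun ω => ∑ a, G i a * Sf B a j ω) (μm d m) :=
    integrable_finset_sum _ fun a _ => (SInt1 B a j).const_mul _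
  have int2 : Integrable (fun ω => ∑ a, Sf B i a ω * G a j) (μm d m) :=
    integrable_finset_sum _ fun a _ => (SInt1 B i a).mul_const _
  have int3 : Integrable
      (fun ω => ∑ b, ∑ a, (G * G) a b * (Sf B i a ω * Sf B b j ω)) (μm d m) :=
    integrable_finset_sum _ fun b _ => integrable_finset_sum _ fun a _ =>
      (SInt2 B i a b j).const_mul _
  -- compute the integral
  have hmeasure : (Measure.pi fun _ : Fin m => Measure.pi fun _ : Fin d => gaussianReal 0 1)
      = μm d m := rfl
  rw [hmeasure]
  rw [show (fun ω : Fin m → Fin d → ℝ =>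
      (((1 : Matrix (Fin d) (Fin d) ℝ) - ((m : ℝ)⁻¹ • (colMatrix B ω * (colMatrix B ω)ᵀ)) * G) *
        ((1 : Matrix (Fin d) (Fin d) ℝ) - G * ((m : ℝ)⁻¹ • (colMatrix B ω * (colMatrix B ω)ᵀ)))) i j)
      = fun ω => (1 : Matrix (Fin d) (Fin d) ℝ) i j
        - (m : ℝ)⁻¹ * (∑ a, G i a * Sf B a j ω)
        - (m : ℝ)⁻¹ * (∑ a, Sf B i a ω * G a j)
        + ((m : ℝ)⁻¹ * (m : ℝ)⁻¹) *
            (∑ b, ∑ a, (G * G) a b * (Sf B i a ω * Sf B b j ω)) from funext hpt]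
  have I2 : Integrable (fun ω : Fin m → Fin d → ℝ =>
      (1 : Matrix (Fin d) (Fin d) ℝ) i j - (m:ℝ)⁻¹ * (∑ a, G i a * Sf B a j ω)) (μm d m) := by
    exact (integrable_const _).sub (int1.const_mul _)
  have I1 : Integrable (fun ω : Fin m → Fin d → ℝ =>
      (1 : Matrix (Fin d) (Fin d) ℝ) i j - (m:ℝ)⁻¹ * (∑ a, G i a * Sf B a j ω)
        - (m:ℝ)⁻¹ * (∑ a, Sf B i a ω * G a j)) (μm d m) := by
    exact I2.sub (int2.const_mul _)
  rw [integral_add I1 (int3.const_mul _)]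
  rw [integral_sub I2 (int2.const_mul _)]
  rw [integral_sub (integrable_const _) (int1.const_mul _)]
  rw [integral_const]
  rw [integral_const_mul, integral_const_mul, integral_const_mul]
  rw [integral_finset_sum _ (fun a _ => (SInt1 B a j).const_mul _)]
  rw [integral_finset_sum _ (fun a _ => (SInt1 B i a).mul_const _)]
  rw [integral_finset_sum _ (fun b _ => integrable_finset_sum _ fun a _ =>
    (SInt2 B i a b j).const_mul _)]
  rw [Finset.sum_congr rfl (fun b _ => integral_finset_sum _ fun a _ =>
    (SInt2 B i a b j).const_mul _)]
  simp only [integral_const_mul, integral_mul_const, SE1, SE2, hBB, measure_univ,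
    ENNReal.toReal_one, probReal_univ, one_smul]
  -- value lemmas
  have hv1 : ∑ a, G i a * ((m:ℝ) * Λ a j) = (m:ℝ) * (G * Λ) i j := by
    rw [Matrix.mul_apply, Finset.mul_sum]
    exact Finset.sum_congr rfl fun a _ => by ring
  have hv2 : ∑ a, ((m:ℝ) * Λ i a) * G a j = (m:ℝ) * (Λ * G) i j := by
    rw [Matrix.mul_apply, Finset.mul_sum]
    exact Finset.sum_congr rfl fun a _ => by ring
  have hMAM : (Λ * (G*G) * Λ) i j = ∑ b, ∑ a, Λ i a * (G*G) a b * Λ b j := by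
    rw [Matrix.mul_apply]
    exact Finset.sum_congr rfl fun b _ => by rw [Matrix.mul_apply, Finset.sum_mul]
  have hS1 : ∑ b, ∑ a, (G*G) a b * (Λ i a * Λ b j) = (Λ * (G*G) * Λ) i j := by
    rw [hMAM]
    exact Finset.sum_congr rfl fun b _ => Finset.sum_congr rfl fun a _ => by ring
  have hS2 : ∑ b, ∑ a, (G*G) a b * (Λ i b * Λ a j) = (Λ * (G*G) * Λ) i j := by
    rw [Finset.sum_comm, hMAM]
    exact Finset.sum_congr rfl fun a _ => Finset.sum_congr rfl fun b _ => by
      rw [hAsym a b]; ring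
  have hS3 : ∑ b, ∑ a, (G*G) a b * (Λ i j * Λ a b) = Λ i j * (Λ * (G*G)).trace := by
    have htr : (Λ * (G*G)).trace = ∑ p, ∑ q, Λ p q * (G*G) q p := by
      rw [Matrix.trace]
      exact Finset.sum_congr rfl fun p _ => by rw [Matrix.diag_apply, Matrix.mul_apply]
    rw [htr]
    simp only [Finset.mul_sum]
    rw [Finset.sum_comm]
    exact Finset.sum_congr rfl fun a _ => Finset.sum_congr rfl fun b _ => by
      rw [hAsym a b]; ring
  have hv3 : ∑ b, ∑ a, (G*G) a b *
        ((m:ℝ)^2 * (Λ i a * Λ b j) + (m:ℝ) * (Λ i b * Λ a j + Λ i j * Λ a b))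
      = (m:ℝ)^2 * (Λ * (G*G) * Λ) i j + (m:ℝ) * (Λ * (G*G) * Λ) i j
        + (m:ℝ) * (Λ i j * (Λ * (G*G)).trace) := by
    rw [Finset.sum_congr rfl (fun b _ => Finset.sum_congr rfl (fun a _ => by
      show _ = (m:ℝ)^2 * ((G*G) a b * (Λ i a * Λ b j))
        + (m:ℝ) * ((G*G) a b * (Λ i b * Λ a j)) + (m:ℝ) * ((G*G) a b * (Λ i j * Λ a b))
      ring))]
    simp only [Finset.sum_add_distrib, ← Finset.mul_sum]
    rw [hS1, hS2, hS3]
  rw [hv1, hv2, hv3]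
  -- matrix identities for the RHS
  have hGLGL : (G*Λ)*(G*Λ) = Λ*(G*G)*Λ := by
    calc (G*Λ)*(G*Λ) = ((G*Λ)*G)*Λ := by noncomm_ring
      _ = ((Λ*G)*G)*Λ := by rw [hcomm]
      _ = (Λ*(G*G))*Λ := by rw [mul_assoc Λ G G]
  have hsq : ((1 : Matrix (Fin d) (Fin d) ℝ) - G * Λ)^2
      = 1 - G*Λ - Λ*G + Λ*(G*G)*Λ := by
    rw [sq]
    conv_rhs => rw [← hcomm, ← hGLGL]
    noncomm_ring
  have hG2L2 : G^2 * Λ^2 = Λ*(G*G)*Λ := by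
    have h : Λ*(G*G)*Λ = (G*G)*(Λ*Λ) := by
      calc Λ*(G*G)*Λ = ((Λ*G)*G)*Λ := by rw [← mul_assoc Λ G G]
        _ = ((G*Λ)*G)*Λ := by rw [← hcomm]
        _ = (G*(Λ*G))*Λ := by rw [mul_assoc G Λ G]
        _ = (G*(G*Λ))*Λ := by rw [← hcomm]
        _ = ((G*G)*Λ)*Λ := by rw [← mul_assoc G G Λ]
        _ = (G*G)*(Λ*Λ) := by rw [mul_assoc]
    rw [sq, sq, h]
  have htreq : (Λ * G^2).trace = (Λ * (G*G)).trace := by rw [sq]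
  rw [hsq, hG2L2, htreq]
  simp only [Matrix.add_apply, Matrix.sub_apply, Matrix.smul_apply, smul_eq_mul]
  field_simp
  ring
end

section
/- Let d, n be positive integers and let Λ be a d×d real symmetric positive definite matrix. Define Γ := (1 + 1/n) Λ + (tr(Λ)/n) I_d. Then in the Loewner (positive semidefinite) order: 0 ⪯ I_d − Γ^{−1} Λ ⪯ (1/n)(I_d + tr(Λ) Λ^{−1}). -/
open Matrix

private lemma psd_smul {d : ℕ} {c : ℝ} (hc : 0 ≤ c) {A : Matrix (Fin d) (Fin d) ℝ}
    (hA : A.PosSemidef) : (c • A).PosSemidef := by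
  rw [posSemidef_iff_dotProduct_mulVec]
  refine ⟨?_, fun x => ?_⟩
  · show (c • A)ᴴ = c • A
    rw [conjTranspose_smul, hA.1]
    simp
  · rw [smul_mulVec, dotProduct_smul, smul_eq_mul]
    exact mul_nonneg hc ((posSemidef_iff_dotProduct_mulVec.mp hA).2 x)

private lemma pd_smul {d : ℕ} {c : ℝ} (hc : 0 < c) {A : Matrix (Fin d) (Fin d) ℝ}
    (hA : A.PosDef) : (c • A).PosDef := by
  rw [posDef_iff_dotProduct_mulVec]
  refine ⟨?_, fun x hx => ?_⟩
  · show (c • A)ᴴ = c • A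
    rw [conjTranspose_smul, hA.1]
    simp
  · rw [smul_mulVec, dotProduct_smul, smul_eq_mul]
    exact mul_pos hc ((posDef_iff_dotProduct_mulVec.mp hA).2 hx)

private lemma trace_nn {d : ℕ} {A : Matrix (Fin d) (Fin d) ℝ} (hA : A.PosSemidef) :
    0 ≤ A.trace := by
  rw [Matrix.trace]
  refine Finset.sum_nonneg fun i _ => ?_
  exact hA.diag_nonneg

/-- For `Λ` symmetric positive definite and
`Γ := (1 + 1/n) Λ + (tr(Λ)/n) I`, in the Loewner order:
`0 ⪯ I − Γ⁻¹ Λ ⪯ (1/n)(I + tr(Λ) Λ⁻¹)`. -/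
theorem stmt8 (d n : ℕ) (hd : 0 < d) (hn : 0 < n)
    (Λ : Matrix (Fin d) (Fin d) ℝ) (hΛ : Λ.PosDef)
    (Γ : Matrix (Fin d) (Fin d) ℝ)
    (hΓ : Γ = (1 + (n : ℝ)⁻¹) • Λ + (Λ.trace / n) • (1 : Matrix (Fin d) (Fin d) ℝ)) :
    ((1 : Matrix (Fin d) (Fin d) ℝ) - Γ⁻¹ * Λ).PosSemidef ∧
      ((n : ℝ)⁻¹ • ((1 : Matrix (Fin d) (Fin d) ℝ) + Λ.trace • Λ⁻¹) -
        ((1 : Matrix (Fin d) (Fin d) ℝ) - Γ⁻¹ * Λ)).PosSemidef := by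
  set t : ℝ := Λ.trace with ht_def
  have ht : 0 ≤ t := trace_nn hΛ.posSemidef
  have hn' : (0:ℝ) < n := by exact_mod_cast hn
  have hu : (0:ℝ) < 1 + (n:ℝ)⁻¹ := by positivity
  have hc : (0:ℝ) ≤ t / n := div_nonneg ht hn'.le
  -- Γ is positive definite
  have hΓpd : Γ.PosDef := by
    rw [hΓ]
    exact (pd_smul hu hΛ).add_posSemidef (psd_smul hc Matrix.PosSemidef.one)
  have hΛH : Λᴴ = Λ := hΛ.1
  have hΓH : Γᴴ = Γ := hΓpd.1
  have hΛiH : Λ⁻¹ᴴ = Λ⁻¹ := hΛ.inv.1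
  have hΓiH : Γ⁻¹ᴴ = Γ⁻¹ := hΓpd.inv.1
  have hΛd : IsUnit Λ.det := (Matrix.isUnit_iff_isUnit_det Λ).mp hΛ.isUnit
  have hΓd : IsUnit Γ.det := (Matrix.isUnit_iff_isUnit_det Γ).mp hΓpd.isUnit
  have hΛ1 : Λ * Λ⁻¹ = 1 := Matrix.mul_nonsing_inv Λ hΛd
  have hΛ1' : Λ⁻¹ * Λ = 1 := Matrix.nonsing_inv_mul Λ hΛd
  have hΓ1 : Γ * Γ⁻¹ = 1 := Matrix.mul_nonsing_inv Γ hΓd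
  have hΓ1' : Γ⁻¹ * Γ = 1 := Matrix.nonsing_inv_mul Γ hΓd
  set S : Matrix (Fin d) (Fin d) ℝ := Γ - Λ with hS_def
  have hS : S = (n:ℝ)⁻¹ • Λ + (t / n) • (1 : Matrix (Fin d) (Fin d) ℝ) := by
    rw [hS_def, hΓ]; module
  -- commutation facts
  have hcomm : Γ * Λ = Λ * Γ := by
    rw [hΓ]
    simp only [add_mul, mul_add, smul_mul_assoc, mul_smul_comm, one_mul, mul_one]
  have hcomm_inv : Γ⁻¹ * Λ = Λ * Γ⁻¹ := by
    calc Γ⁻¹ * Λ = Γ⁻¹ * Λ * (Γ * Γ⁻¹) := by rw [hΓ1, mul_one]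
    _ = Γ⁻¹ * (Λ * Γ) * Γ⁻¹ := by noncomm_ring
    _ = Γ⁻¹ * (Γ * Λ) * Γ⁻¹ := by rw [hcomm]
    _ = (Γ⁻¹ * Γ) * (Λ * Γ⁻¹) := by noncomm_ring
    _ = Λ * Γ⁻¹ := by rw [hΓ1', one_mul]
  -- key identity 1
  have h1 : (1 : Matrix (Fin d) (Fin d) ℝ) - Γ⁻¹ * Λ = Γ⁻¹ * (S * Γ) * Γ⁻¹ := by
    rw [hS_def]
    calc (1 : Matrix (Fin d) (Fin d) ℝ) - Γ⁻¹ * Λ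
        = (Γ⁻¹ * Γ) * (Γ * Γ⁻¹) - Γ⁻¹ * Λ * (Γ * Γ⁻¹) := by rw [hΓ1, hΓ1']; simp
      _ = Γ⁻¹ * ((Γ - Λ) * Γ) * Γ⁻¹ := by noncomm_ring
  -- S * Γ is PSD
  have hSΓ : (S * Γ).PosSemidef := by
    have hexp : S * Γ = ((n:ℝ)⁻¹ * (1 + (n:ℝ)⁻¹)) • (Λᴴ * Λ) +
        (((n:ℝ)⁻¹ * (t / n) + (t / n) * (1 + (n:ℝ)⁻¹)) • Λ +
          ((t / n) * (t / n)) • (1 : Matrix (Fin d) (Fin d) ℝ)) := by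
      rw [hS, hΓ, hΛH]
      simp only [add_mul, mul_add, smul_mul_assoc, mul_smul_comm, one_mul, mul_one, smul_smul]
      module
    rw [hexp]
    refine (psd_smul (by positivity) (Matrix.posSemidef_conjTranspose_mul_self Λ)).add
      ((psd_smul (by positivity) hΛ.posSemidef).add
        (psd_smul (by positivity) Matrix.PosSemidef.one))
  have part1 : ((1 : Matrix (Fin d) (Fin d) ℝ) - Γ⁻¹ * Λ).PosSemidef := by
    rw [h1]
    have := hSΓ.mul_mul_conjTranspose_same Γ⁻¹
    rwa [hΓiH] at this
  refine ⟨part1, ?_⟩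
  -- part 2
  have hA1 : Λ⁻¹ * S = (n:ℝ)⁻¹ • ((1 : Matrix (Fin d) (Fin d) ℝ) + t • Λ⁻¹) := by
    rw [hS]
    simp only [mul_add, mul_smul_comm, mul_one, hΛ1', smul_add, smul_smul]
    rw [div_eq_mul_inv]
    module
  have hA2 : Γ⁻¹ * S = 1 - Γ⁻¹ * Λ := by
    rw [hS_def, mul_sub, hΓ1']
  have hA3 : Λ⁻¹ - Γ⁻¹ = Γ⁻¹ * S * Λ⁻¹ := by
    rw [hS_def]
    calc Λ⁻¹ - Γ⁻¹ = (Γ⁻¹ * Γ) * Λ⁻¹ - Γ⁻¹ * (Λ * Λ⁻¹) := by rw [hΓ1', hΛ1]; simp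
      _ = Γ⁻¹ * (Γ - Λ) * Λ⁻¹ := by noncomm_ring
  have hSΛi : S * Λ⁻¹ = Λ⁻¹ * S := by
    rw [hS]
    simp only [add_mul, mul_add, smul_mul_assoc, mul_smul_comm, one_mul, mul_one, hΛ1, hΛ1']
  have hSΓi : S * Γ⁻¹ = Γ⁻¹ * S := by
    rw [hS_def, sub_mul, mul_sub, hcomm_inv, hΓ1, hΓ1']
  have hD : (n:ℝ)⁻¹ • ((1 : Matrix (Fin d) (Fin d) ℝ) + t • Λ⁻¹) -
      ((1 : Matrix (Fin d) (Fin d) ℝ) - Γ⁻¹ * Λ) = S * (Γ⁻¹ * Λ⁻¹) * S := by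
    rw [← hA1, ← hA2]
    calc Λ⁻¹ * S - Γ⁻¹ * S = (Λ⁻¹ - Γ⁻¹) * S := by rw [sub_mul]
      _ = Γ⁻¹ * S * Λ⁻¹ * S := by rw [hA3]
      _ = Γ⁻¹ * (S * Λ⁻¹) * S := by rw [mul_assoc Γ⁻¹ S Λ⁻¹]
      _ = (Γ⁻¹ * Λ⁻¹) * (S * S) := by rw [hSΛi]; simp only [mul_assoc]
      _ = ((Γ⁻¹ * Λ⁻¹) * S) * S := by simp only [mul_assoc]
      _ = (Γ⁻¹ * (Λ⁻¹ * S)) * S := by simp only [mul_assoc]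
      _ = (Γ⁻¹ * (S * Λ⁻¹)) * S := by rw [hSΛi]
      _ = ((Γ⁻¹ * S) * Λ⁻¹) * S := by simp only [mul_assoc]
      _ = ((S * Γ⁻¹) * Λ⁻¹) * S := by rw [hSΓi]
      _ = S * (Γ⁻¹ * Λ⁻¹) * S := by simp only [mul_assoc]
  -- Γ⁻¹ * Λ⁻¹ is PSD
  have hCpsd : (Γ⁻¹ * Λ⁻¹).PosSemidef := by
    have hmid : (Λ⁻¹ * Γ).PosSemidef := by
      have hexp : Λ⁻¹ * Γ = (1 + (n:ℝ)⁻¹) • (1 : Matrix (Fin d) (Fin d) ℝ) + (t / n) • Λ⁻¹ := by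
        rw [hΓ]
        simp only [mul_add, mul_smul_comm, mul_one, hΛ1']
      rw [hexp]
      exact (psd_smul hu.le Matrix.PosSemidef.one).add (psd_smul hc hΛ.inv.posSemidef)
    have hid : Γ⁻¹ * Λ⁻¹ = Γ⁻¹ * (Λ⁻¹ * Γ) * Γ⁻¹ := by
      calc Γ⁻¹ * Λ⁻¹ = Γ⁻¹ * Λ⁻¹ * (Γ * Γ⁻¹) := by rw [hΓ1, mul_one]
        _ = Γ⁻¹ * (Λ⁻¹ * Γ) * Γ⁻¹ := by noncomm_ring
    rw [hid]
    have := hmid.mul_mul_conjTranspose_same Γ⁻¹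
    rwa [hΓiH] at this
  rw [hD]
  have hSH : Sᴴ = S := by
    rw [hS_def, conjTranspose_sub, hΓH, hΛH]
  have := hCpsd.mul_mul_conjTranspose_same S
  rwa [hSH] at this
end

section
/- Let d, n be positive integers and let Λ be a d×d real symmetric positive definite matrix with smallest eigenvalue λ_min(Λ). Define Γ := (1 + 1/n) Λ + (tr(Λ)/n) I_d and H := tr(Λ)/λ_min(Λ). Then in the Loewner order: I_d − Γ^{−1} Λ ⪯ (1 + n/(1 + H))^{−1} I_d. -/
open Matrix

/-- For `Λ` symmetric positive definite with smallest eigenvalue `λmin`,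
`Γ := (1 + 1/n) Λ + (tr(Λ)/n) I` and hardness `H := tr(Λ)/λmin`, in the Loewner order:
`I − Γ⁻¹ Λ ⪯ (1 + n/(1 + H))⁻¹ I`. -/
theorem stmt12 (d n : ℕ) (hd : 0 < d) (hn : 0 < n)
    (Λ : Matrix (Fin d) (Fin d) ℝ) (hΛ : Λ.PosDef)
    (Γ : Matrix (Fin d) (Fin d) ℝ)
    (hΓ : Γ = (1 + (n : ℝ)⁻¹) • Λ + (Λ.trace / n) • (1 : Matrix (Fin d) (Fin d) ℝ))
    (lmin : ℝ) (hlmin : IsLeast (Set.range hΛ.1.eigenvalues) lmin)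
    (H : ℝ) (hH : H = Λ.trace / lmin) :
    ((1 + (n : ℝ) / (1 + H))⁻¹ • (1 : Matrix (Fin d) (Fin d) ℝ) -
      ((1 : Matrix (Fin d) (Fin d) ℝ) - Γ⁻¹ * Λ)).PosSemidef := by
  have hHerm := hΛ.1
  set ev := hHerm.eigenvalues with hev
  set U : Matrix (Fin d) (Fin d) ℝ := (hHerm.eigenvectorUnitary : Matrix (Fin d) (Fin d) ℝ) with hUdef
  have hU1 : U * star U = 1 := (Matrix.mem_unitaryGroup_iff).mp hHerm.eigenvectorUnitary.2
  have hU2 : star U * U = 1 := (Matrix.mem_unitaryGroup_iff').mp hHerm.eigenvectorUnitary.2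
  have hspec : Λ = U * diagonal ev * star U := by
    have := hHerm.spectral_theorem
    simpa [RCLike.ofReal_real_eq_id] using this
  have hevpos : ∀ i, 0 < ev i := fun i => hΛ.eigenvalues_pos i
  have hnpos : (0:ℝ) < n := Nat.cast_pos.mpr hn
  set t := Λ.trace with ht
  have htr : t = ∑ i, ev i := by
    rw [ht]
    conv_lhs => rw [hspec]
    rw [Matrix.trace_mul_cycle, hU2, Matrix.one_mul, Matrix.trace_diagonal]
  have : Nonempty (Fin d) := ⟨⟨0, hd⟩⟩
  have htpos : 0 < t := by
    rw [htr]; exact Finset.sum_pos (fun i _ => hevpos i) Finset.univ_nonempty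
  obtain ⟨⟨i0, hi0⟩, hlb⟩ := hlmin
  have hlminpos : 0 < lmin := hi0 ▸ hevpos i0
  have hlble : ∀ i, lmin ≤ ev i := fun i => hlb (Set.mem_range_self i)
  have hHpos : 0 < H := by rw [hH]; positivity
  set γ : Fin d → ℝ := fun i => (1 + (n:ℝ)⁻¹) * ev i + t / n with hγdef
  have hγpos : ∀ i, 0 < γ i := by
    intro i; have := hevpos i; have := htpos; positivity
  have key : ∀ A B : Matrix (Fin d) (Fin d) ℝ,
      (U * A * star U) * (U * B * star U) = U * (A * B) * star U := by
    intro A B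
    simp only [Matrix.mul_assoc]
    rw [← Matrix.mul_assoc (star U) U, hU2, Matrix.one_mul]
  have subkey : ∀ A B : Matrix (Fin d) (Fin d) ℝ,
      (U * A * star U) - (U * B * star U) = U * (A - B) * star U := by
    intro A B
    rw [Matrix.mul_sub, Matrix.sub_mul]
  have smulkey : ∀ (r : ℝ) (A : Matrix (Fin d) (Fin d) ℝ),
      r • (U * A * star U) = U * (r • A) * star U := by
    intro r A
    rw [mul_smul_comm, smul_mul_assoc]
  have hΓd : Γ = U * diagonal γ * star U := by
    have e1 : diagonal γ = (1 + (n:ℝ)⁻¹) • diagonal ev + (t/n) • (1 : Matrix (Fin d) (Fin d) ℝ) := by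
      ext i j
      rcases eq_or_ne i j with h | h
      · subst h
        simp [hγdef, Matrix.diagonal_apply_eq, Matrix.one_apply_eq]
      · simp [Matrix.diagonal_apply_ne _ h, Matrix.one_apply_ne h]
    rw [hΓ, e1, Matrix.mul_add, Matrix.add_mul]
    congr 1
    · rw [Matrix.mul_smul, Matrix.smul_mul, hspec]
    · rw [Matrix.mul_smul, Matrix.smul_mul, Matrix.mul_one, hU1]
  have hΓinv : Γ⁻¹ = U * diagonal (fun i => (γ i)⁻¹) * star U := by
    apply Matrix.inv_eq_right_inv
    rw [hΓd, key, Matrix.diagonal_mul_diagonal]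
    have e2 : (fun i => γ i * (γ i)⁻¹) = fun _ => (1:ℝ) := by
      funext i; exact mul_inv_cancel₀ (hγpos i).ne'
    rw [e2, Matrix.diagonal_one, Matrix.mul_one, hU1]
  set c : ℝ := (1 + (n : ℝ) / (1 + H))⁻¹ with hc
  have hgoal : c • (1 : Matrix (Fin d) (Fin d) ℝ) - (1 - Γ⁻¹ * Λ)
      = U * diagonal (fun i => c - (1 - (γ i)⁻¹ * ev i)) * star U := by
    have h1 : (1 : Matrix (Fin d) (Fin d) ℝ) = U * diagonal (fun _ => (1:ℝ)) * star U := by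
      rw [Matrix.diagonal_one, Matrix.mul_one, hU1]
    have hΓΛ : Γ⁻¹ * Λ = U * diagonal (fun i => (γ i)⁻¹ * ev i) * star U := by
      rw [hΓinv]
      conv_lhs => rw [hspec]
      rw [key, Matrix.diagonal_mul_diagonal]
    rw [hΓΛ]
    conv_lhs => rw [h1]
    rw [smulkey, subkey, subkey]
    congr 2
    ext i j
    rcases eq_or_ne i j with h | h
    · subst h
      simp [Matrix.diagonal_apply_eq]
    · simp [Matrix.diagonal_apply_ne _ h, Matrix.one_apply_ne h]
  rw [hgoal, Matrix.star_eq_conjTranspose U]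
  apply Matrix.PosSemidef.mul_mul_conjTranspose_same
  rw [Matrix.posSemidef_diagonal_iff]
  intro i
  -- scalar inequality
  have hγi := hγpos i
  have hevi := hevpos i
  have hle := hlble i
  rw [sub_nonneg, hc, hH]
  have hγval : γ i = (((n:ℝ) + 1) * ev i + t) / n := by
    rw [hγdef]; field_simp
  have hden : (0:ℝ) < ((n:ℝ)+1) * ev i + t := by positivity
  have hL : 1 - (γ i)⁻¹ * ev i = (ev i + t) / (((n:ℝ)+1) * ev i + t) := by
    rw [hγval]
    field_simp
    ring
  have h1H : (0:ℝ) < 1 + t/lmin := by positivity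
  have hR : (1 + (n:ℝ)/(1 + t/lmin))⁻¹ = (1 + t/lmin) / (1 + t/lmin + n) := by
    rw [eq_div_iff (by positivity)]
    field_simp
  rw [hL, hR, div_le_div_iff₀ hden (by positivity)]
  set s : ℝ := t / lmin with hsdef
  have hspos : 0 < s := by positivity
  have hs : s * lmin = t := div_mul_cancel₀ t hlminpos.ne'
  have hkey : t ≤ s * ev i := by
    calc t = s * lmin := hs.symm
    _ ≤ s * ev i := mul_le_mul_of_nonneg_left hle hspos.le
  nlinarith [mul_nonneg hnpos.le (sub_nonneg.mpr hkey)]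
end

section
/- Let d, n be positive integers and let Λ be a d×d real symmetric positive definite matrix with smallest eigenvalue λ_min(Λ). Define Γ := (1 + 1/n) Λ + (tr(Λ)/n) I_d and H := tr(Λ)/λ_min(Λ). Then for every natural number k: tr((I_d − Γ^{−1}Λ)^{2k}) ≤ d · (1 + n/(1 + H))^{−2k}. -/
open Matrix

private lemma conj_pow_aux {d : ℕ} (U D : Matrix (Fin d) (Fin d) ℝ)
    (h : star U * U = 1) (h2 : U * star U = 1) (m : ℕ) :
    (U * D * star U) ^ m = U * D ^ m * star U := by
  induction m with
  | zero => simp [h2]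
  | succ m ih =>
      rw [pow_succ, ih, pow_succ]
      calc U * D ^ m * star U * (U * D * star U)
          = U * D ^ m * (star U * U) * D * star U := by
            simp only [Matrix.mul_assoc]
        _ = U * (D ^ m * D) * star U := by rw [h]; simp only [Matrix.mul_one, Matrix.mul_assoc]

/-- For `Λ` symmetric positive definite with smallest eigenvalue `λmin`,
`Γ := (1 + 1/n) Λ + (tr(Λ)/n) I` and hardness `H := tr(Λ)/λmin`, for every `k`:
`tr((I − Γ⁻¹Λ)^{2k}) ≤ d · (1 + n/(1 + H))^{−2k}`. -/
theorem stmt13 (d n : ℕ) (hd : 0 < d) (hn : 0 < n)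
    (Λ : Matrix (Fin d) (Fin d) ℝ) (hΛ : Λ.PosDef)
    (Γ : Matrix (Fin d) (Fin d) ℝ)
    (hΓ : Γ = (1 + (n : ℝ)⁻¹) • Λ + (Λ.trace / n) • (1 : Matrix (Fin d) (Fin d) ℝ))
    (lmin : ℝ) (hlmin : IsLeast (Set.range hΛ.1.eigenvalues) lmin)
    (H : ℝ) (hH : H = Λ.trace / lmin) :
    ∀ k : ℕ,
      (((1 : Matrix (Fin d) (Fin d) ℝ) - Γ⁻¹ * Λ) ^ (2 * k)).trace ≤
        (d : ℝ) * ((1 + (n : ℝ) / (1 + H)) ^ (2 * k))⁻¹ := by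
  intro k
  set U : Matrix (Fin d) (Fin d) ℝ := (hΛ.1.eigenvectorUnitary : Matrix (Fin d) (Fin d) ℝ)
    with hUdef
  set μ : Fin d → ℝ := hΛ.1.eigenvalues with hμdef
  have hU1 : star U * U = 1 :=
    Matrix.mem_unitaryGroup_iff'.mp hΛ.1.eigenvectorUnitary.2
  have hU2 : U * star U = 1 :=
    Matrix.mem_unitaryGroup_iff.mp hΛ.1.eigenvectorUnitary.2
  have hspec : Λ = U * diagonal μ * star U := by
    have := hΛ.1.spectral_theorem
    simpa [RCLike.ofReal_real_eq_id] using this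
  have hμpos : ∀ i, 0 < μ i := hΛ.eigenvalues_pos
  -- trace
  set t : ℝ := Λ.trace with htdef
  have htrace : t = ∑ i, μ i := by
    rw [htdef, hspec, Matrix.trace_mul_cycle, hU1, Matrix.one_mul, Matrix.trace_diagonal]
  have ht : 0 < t := by
    rw [htrace]
    exact Finset.sum_pos (fun i _ => hμpos i) (by simp [Finset.univ_nonempty_iff, Fin.pos_iff_nonempty.mp hd])
  have hnpos : (0:ℝ) < n := by exact_mod_cast hn
  -- lmin
  obtain ⟨i0, hi0⟩ := hlmin.1
  have hlminpos : 0 < lmin := hi0 ▸ hμpos i0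
  have hlmin_le : ∀ i, lmin ≤ μ i := fun i => hlmin.2 ⟨i, rfl⟩
  -- Γ diagonalized
  set g : Fin d → ℝ := fun i => (1 + (n:ℝ)⁻¹) * μ i + t / n with hgdef
  have hgpos : ∀ i, 0 < g i := fun i => by
    have := hμpos i
    have h1 : (0:ℝ) < 1 + (n:ℝ)⁻¹ := by positivity
    positivity
  have hdg : diagonal g = (1 + (n:ℝ)⁻¹) • diagonal μ + (t / n) • (1 : Matrix (Fin d) (Fin d) ℝ) := by
    ext i j
    rcases eq_or_ne i j with rfl | h
    · simp [hgdef]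
    · simp [Matrix.diagonal_apply_ne _ h, Matrix.one_apply_ne h]
  have hΓdiag : Γ = U * diagonal g * star U := by
    rw [hΓ, hspec, hdg, Matrix.mul_add, Matrix.add_mul, Matrix.mul_smul, Matrix.smul_mul,
      Matrix.mul_smul, Matrix.smul_mul, Matrix.mul_one, hU2]
  have hΓinv : Γ⁻¹ = U * diagonal (fun i => (g i)⁻¹) * star U := by
    apply Matrix.inv_eq_right_inv
    rw [hΓdiag]
    calc U * diagonal g * star U * (U * diagonal (fun i => (g i)⁻¹) * star U)
        = U * (diagonal g * (star U * U) * diagonal (fun i => (g i)⁻¹)) * star U := by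
          simp only [Matrix.mul_assoc]
      _ = 1 := by
          rw [hU1, Matrix.mul_one, diagonal_mul_diagonal]
          have : (fun i => g i * (g i)⁻¹) = fun _ => (1:ℝ) := by
            funext i
            exact mul_inv_cancel₀ (hgpos i).ne'
          rw [this, diagonal_one]
          simp [hU2]
  -- the matrix I - Γ⁻¹Λ
  set f : Fin d → ℝ := fun i => 1 - (g i)⁻¹ * μ i with hfdef
  have hM : (1 : Matrix (Fin d) (Fin d) ℝ) - Γ⁻¹ * Λ = U * diagonal f * star U := by
    rw [hΓinv, hspec]
    have h1 : (1 : Matrix (Fin d) (Fin d) ℝ) = U * diagonal (fun _ => (1:ℝ)) * star U := by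
      simp [hU2]
    calc (1 : Matrix (Fin d) (Fin d) ℝ) -
          U * diagonal (fun i => (g i)⁻¹) * star U * (U * diagonal μ * star U)
        = U * diagonal (fun _ => (1:ℝ)) * star U -
          U * (diagonal (fun i => (g i)⁻¹) * (star U * U) * diagonal μ) * star U := by
          rw [← h1]; simp only [Matrix.mul_assoc]
      _ = U * (diagonal (fun _ => (1:ℝ)) - diagonal (fun i => (g i)⁻¹) * diagonal μ) * star U := by
          rw [hU1, Matrix.mul_one, Matrix.mul_sub, Matrix.sub_mul]
      _ = U * diagonal f * star U := by
          rw [diagonal_mul_diagonal, diagonal_sub]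
  -- trace of power
  have htr : (((1 : Matrix (Fin d) (Fin d) ℝ) - Γ⁻¹ * Λ) ^ (2 * k)).trace
      = ∑ i, (f i) ^ (2 * k) := by
    rw [hM, conj_pow_aux U _ hU1 hU2, Matrix.trace_mul_cycle, hU1, Matrix.one_mul,
      Matrix.diagonal_pow, Matrix.trace_diagonal]
    rfl
  rw [htr]
  -- scalar bound
  set y : ℝ := (lmin + t) / ((n + 1) * lmin + t) with hydef
  have hden : (0:ℝ) < (n + 1) * lmin + t := by positivity
  have hHpos : 0 < 1 + H := by
    rw [hH]; positivity
  have hy : (1 + (n:ℝ) / (1 + H))⁻¹ = y := by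
    rw [hydef, hH]
    rw [inv_eq_iff_eq_inv, eq_comm, inv_div]
    field_simp
    ring
  have hbound : ∀ i, (f i) ^ (2 * k) ≤ y ^ (2 * k) := by
    intro i
    have hgi := hgpos i
    have hfi : f i = (μ i + t) / ((n + 1) * μ i + t) := by
      rw [hfdef]
      have hden2 : (0:ℝ) < (n + 1) * μ i + t := by have := hμpos i; positivity
      simp only [hgdef]
      field_simp
      ring
    have hf0 : 0 ≤ f i := by
      rw [hfi]
      have := hμpos i
      positivity
    have hfy : f i ≤ y := by
      rw [hfi, hydef, div_le_div_iff₀ (by have := hμpos i; positivity) hden]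
      have hli := hlmin_le i
      nlinarith [mul_nonneg (mul_nonneg hnpos.le ht.le) (sub_nonneg.mpr hli), hμpos i]
    exact pow_le_pow_left₀ hf0 hfy _
  calc ∑ i, (f i) ^ (2 * k) ≤ ∑ _i : Fin d, y ^ (2 * k) :=
        Finset.sum_le_sum (fun i _ => hbound i)
    _ = (d : ℝ) * y ^ (2 * k) := by simp [mul_comm]
    _ = (d : ℝ) * ((1 + (n : ℝ) / (1 + H)) ^ (2 * k))⁻¹ := by
        rw [← inv_pow, hy]
end
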